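/- arXiv:1801.04381 — 2 statements merged into one kernel-verified Lean document; each statement's English description precedes it below -/
import Mathlib

section
/- (Invertibility of ReLU, uniqueness direction) Let B be an m × n real matrix, x₀ ∈ ℝⁿ, and y₀ = ReLU(B x₀). Let T ⊆ {1,…,m} be the set of indices i with (y₀)_i ≠ 0. If the rows of B indexed by T span ℝⁿ (i.e., the restricted matrix B_T has rank n), then x₀ is the unique solution of the equation y₀ = ReLU(B x). -/
/-- Coordinatewise ReLU on `ℝᵐ`. -/
noncomputable def relu {m : ℕ} (y : Fin m → ℝ) : Fin m → ℝ := fun i => max 0 (y i)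

/-- Invertibility of ReLU, uniqueness direction: if the rows of `B` indexed by the
support `T` of `y₀ = relu (B x₀)` span `ℝⁿ`, then `x₀` is the unique solution of
`relu (B x) = y₀`. -/
theorem relu_unique_solution {m n : ℕ} (B : Matrix (Fin m) (Fin n) ℝ) (x₀ : Fin n → ℝ)
    (y₀ : Fin m → ℝ) (hy₀ : y₀ = relu (B.mulVec x₀))
    (hspan : Submodule.span ℝ {r : Fin n → ℝ | ∃ i, y₀ i ≠ 0 ∧ r = B i} = ⊤) :
    ∀ x : Fin n → ℝ, relu (B.mulVec x) = y₀ → x = x₀ := by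
  intro x hx
  set z : Fin n → ℝ := x - x₀ with hz
  -- linear functional r ↦ r ⬝ᵥ z
  let f : (Fin n → ℝ) →ₗ[ℝ] ℝ :=
    { toFun := fun r => dotProduct r z
      map_add' := fun a b => add_dotProduct a b z
      map_smul' := fun c a => smul_dotProduct c a z }
  have hker : {r : Fin n → ℝ | ∃ i, y₀ i ≠ 0 ∧ r = B i} ⊆ (LinearMap.ker f : Set (Fin n → ℝ)) := by
    rintro r ⟨i, hi, rfl⟩
    have h0 : y₀ i = B.mulVec x₀ i := by
      have := congrFun hy₀ i
      simp only [relu] at this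
      rcases le_or_gt (B.mulVec x₀ i) 0 with h | h
      · exact absurd (this.trans (max_eq_left h)) hi
      · rw [this, max_eq_right h.le]
    have h1 : B.mulVec x i = y₀ i := by
      have := congrFun hx i
      simp only [relu] at this
      rcases le_or_gt (B.mulVec x i) 0 with h | h
      · exact absurd (this ▸ (max_eq_left h).symm).symm hi
      · rw [← this, max_eq_right h.le]
    have : dotProduct (B i) z = 0 := by
      have : dotProduct (B i) x - dotProduct (B i) x₀ = 0 := by
        have hx' : dotProduct (B i) x = B.mulVec x i := rfl
        have hx₀' : dotProduct (B i) x₀ = B.mulVec x₀ i := rfl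
        rw [hx', hx₀', h1, ← h0, sub_self]
      rw [hz]
      simpa [dotProduct_sub] using this
    simpa [LinearMap.mem_ker, f] using this
  have hle : Submodule.span ℝ {r : Fin n → ℝ | ∃ i, y₀ i ≠ 0 ∧ r = B i} ≤ LinearMap.ker f :=
    Submodule.span_le.mpr hker
  rw [hspan, top_le_iff] at hle
  have hzmem : z ∈ LinearMap.ker f := hle ▸ Submodule.mem_top
  have : dotProduct z z = 0 := hzmem
  have hz0 : z = 0 := by
    rwa [dotProduct_self_eq_zero] at this
  have := sub_eq_zero.mp hz0
  exact this
end

section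
/- (Invertibility of ReLU, non-uniqueness direction) Let B be an m × n real matrix, x₀ ∈ ℝⁿ, and y₀ = ReLU(B x₀). Let T be the set of indices where y₀ is nonzero. If the rows of B indexed by T do not span ℝⁿ, and moreover B x₀ has all coordinates strictly positive outside T negated (precisely: (Bx₀)_i < 0 for all i ∉ T), then there exist infinitely many x ∈ ℝⁿ with ReLU(B x) = y₀. -/
/-- Invertibility of ReLU, non-uniqueness direction: if the rows of `B` indexed by
the support `T` of `y₀ = relu (B x₀)` do not span `ℝⁿ`, and `(B x₀) i < 0` for all
`i ∉ T`, then there are infinitely many solutions of `relu (B x) = y₀`. -/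
theorem relu_infinitely_many_solutions {m n : ℕ} (B : Matrix (Fin m) (Fin n) ℝ)
    (x₀ : Fin n → ℝ) (y₀ : Fin m → ℝ) (hy₀ : y₀ = relu (B.mulVec x₀))
    (hspan : Submodule.span ℝ {r : Fin n → ℝ | ∃ i, y₀ i ≠ 0 ∧ r = B i} ≠ ⊤)
    (hneg : ∀ i, y₀ i = 0 → B.mulVec x₀ i < 0) :
    {x : Fin n → ℝ | relu (B.mulVec x) = y₀}.Infinite := by
  obtain ⟨f, hf0, hfmap⟩ :=
    Submodule.exists_dual_map_eq_bot_of_lt_top hspan.lt_top inferInstance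
  -- f vanishes on each row B i with y₀ i ≠ 0
  have hfrow : ∀ i, y₀ i ≠ 0 → f (B i) = 0 := by
    intro i hi
    have : f (B i) ∈ Submodule.map f (Submodule.span ℝ {r : Fin n → ℝ | ∃ i, y₀ i ≠ 0 ∧ r = B i}) :=
      Submodule.mem_map_of_mem (Submodule.subset_span ⟨i, hi, rfl⟩)
    simpa [hfmap] using this
  -- the direction vector
  set v : Fin n → ℝ := fun i => f fun j => if i = j then 1 else 0 with hv
  have hfeq : ∀ x : Fin n → ℝ, f x = dotProduct x v := by
    intro x
    rw [LinearMap.pi_apply_eq_sum_univ f x]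
    simp only [dotProduct, hv, smul_eq_mul]
  have hvne : v ≠ 0 := by
    intro h
    apply hf0
    ext x
    simp [hfeq, h, dotProduct]
  have hmul : ∀ t : ℝ, ∀ i, B.mulVec (x₀ + t • v) i = B.mulVec x₀ i + t * (dotProduct (B i) v) := by
    intro t i
    simp [Matrix.mulVec, dotProduct_add, dotProduct_smul, smul_eq_mul]
  -- the set of good parameters t
  set S : Set ℝ := {t : ℝ | ∀ i, y₀ i = 0 → B.mulVec (x₀ + t • v) i < 0} with hS
  have hSnhds : S ∈ nhds (0 : ℝ) := by
    have : ∀ᶠ t in nhds (0 : ℝ), ∀ i, y₀ i = 0 → B.mulVec (x₀ + t • v) i < 0 := by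
      rw [Filter.eventually_all]
      intro i
      by_cases hi : y₀ i = 0
      · have hc : Continuous fun t : ℝ => B.mulVec x₀ i + t * (dotProduct (B i) v) := by
          exact continuous_const.add (continuous_id.mul continuous_const)
        have h0 : B.mulVec x₀ i + (0 : ℝ) * (dotProduct (B i) v) < 0 := by
          simpa using hneg i hi
        have := (hc.tendsto 0).eventually (eventually_lt_nhds h0)
        filter_upwards [this] with t ht _
        rw [hmul]; simpa using ht
      · filter_upwards with t ht; exact absurd ht hi
    exact this
  have hSinf : S.Infinite := infinite_of_mem_nhds (0 : ℝ) hSnhds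
  -- map t ↦ x₀ + t • v
  have hinj : Set.InjOn (fun t : ℝ => x₀ + t • v) S := by
    intro a _ b _ hab
    have hab' : x₀ + a • v = x₀ + b • v := hab
    have h1 : a • v = b • v := add_left_cancel hab'
    have h2 : (a - b) • v = 0 := by rw [sub_smul, h1, sub_self]
    rcases smul_eq_zero.mp h2 with h | h
    · exact sub_eq_zero.mp h
    · exact absurd h hvne
  refine Set.Infinite.mono ?_ ((hSinf.image hinj))
  rintro x ⟨t, ht, rfl⟩
  show relu (B.mulVec (x₀ + t • v)) = y₀
  funext i
  by_cases hi : y₀ i = 0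
  · have := ht i hi
    simp [relu, hi, le_of_lt this]
  · have hfr : dotProduct (B i) v = 0 := by rw [← hfeq]; exact hfrow i hi
    rw [relu]
    simp only [hmul t i, hfr, mul_zero, add_zero]
    rw [hy₀]; rfl
end
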